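/- arXiv:1211.3223 — 3 statements merged into one kernel-verified Lean document; each statement's English description precedes it below -/
import Mathlib

section
/- Let (E, d) be a metric space admitting the metric doubling constant C₀, let r > 0, and let {x_j}_{j ∈ J} be a countable family of points of E with d(x_i, x_j) ≥ r for all i ≠ j. Then there exists a coloring ξ : J → {1, 2, …, C₀^5} such that whenever i ≠ j and ξ(i) = ξ(j), one has d(x_i, x_j) > 10r. -/
/-- A metric space `E` admits the metric doubling constant `C₀` if every closed ball
of radius `2r` can be covered by at most `C₀` closed balls of radius `r`. -/
def MetricDoublingConst (E : Type*) [MetricSpace E] (C₀ : ℕ) : Prop :=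
  ∀ (x : E) (r : ℝ), 0 < r →
    ∃ t : Finset E, t.card ≤ C₀ ∧
      Metric.closedBall x (2 * r) ⊆ ⋃ y ∈ t, Metric.closedBall y r

/-- Iterated doubling: a ball of radius `2^k * s` is covered by `C₀^k` balls of radius `s`. -/
lemma metricDoubling_cover_pow {E : Type*} [MetricSpace E] {C₀ : ℕ}
    (hE : MetricDoublingConst E C₀) (s : ℝ) (hs : 0 < s) (k : ℕ) (x : E) :
    ∃ t : Finset E, t.card ≤ C₀ ^ k ∧
      Metric.closedBall x (2 ^ k * s) ⊆ ⋃ y ∈ t, Metric.closedBall y s := by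
  classical
  induction k generalizing x with
  | zero => exact ⟨{x}, by simp, by simp⟩
  | succ k ih =>
    obtain ⟨t₀, ht₀c, ht₀⟩ := hE x (2 ^ k * s) (by positivity)
    choose f hf1 hf2 using fun y : E => ih y
    refine ⟨t₀.biUnion f, ?_, ?_⟩
    · calc (t₀.biUnion f).card ≤ ∑ y ∈ t₀, (f y).card := Finset.card_biUnion_le
        _ ≤ ∑ _y ∈ t₀, C₀ ^ k := Finset.sum_le_sum fun y _ => hf1 y
        _ = t₀.card * C₀ ^ k := by rw [Finset.sum_const, smul_eq_mul]
        _ ≤ C₀ * C₀ ^ k := Nat.mul_le_mul_right _ ht₀c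
        _ = C₀ ^ (k + 1) := (pow_succ' C₀ k).symm
    · intro z hz
      have heq : (2 : ℝ) ^ (k + 1) * s = 2 * (2 ^ k * s) := by ring
      rw [heq] at hz
      obtain ⟨y, hy, hzy⟩ := Set.mem_iUnion₂.mp (ht₀ hz)
      obtain ⟨w, hw, hzw⟩ := Set.mem_iUnion₂.mp (hf2 y hzy)
      exact Set.mem_iUnion₂.mpr ⟨w, Finset.mem_biUnion.mpr ⟨y, hy, hw⟩, hzw⟩

/-- (7)–(8): a countable `r`-separated family in a space with doubling constant `C₀`
can be colored with `C₀^5` colors so that points of the same color lie at mutual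
distance greater than `10 r`. -/
theorem separated_family_coloring {E : Type*} [MetricSpace E] {C₀ : ℕ}
    (hE : MetricDoublingConst E C₀) {J : Type*} [Countable J]
    (xs : J → E) (r : ℝ) (hr : 0 < r)
    (hsep : ∀ i j : J, i ≠ j → r ≤ dist (xs i) (xs j)) :
    ∃ ξ : J → Fin (C₀ ^ 5),
      ∀ i j : J, i ≠ j → ξ i = ξ j → 10 * r < dist (xs i) (xs j) := by
  classical
  rcases isEmpty_or_nonempty J with h | h
  · exact ⟨fun j => isEmptyElim j, fun i => isEmptyElim i⟩
  set N := C₀ ^ 5 with hNdef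
  -- each point has at most N family members (including itself) within distance 10r
  have hball : ∀ i : J, ∃ s : Finset J, s.card ≤ N ∧
      ∀ j, dist (xs i) (xs j) ≤ 10 * r → j ∈ s := by
    intro i
    obtain ⟨t, htc, htcov⟩ := metricDoubling_cover_pow hE (r / 3) (by positivity) 5 (xs i)
    set g : E → Finset J := fun y =>
      if h : ∃ j, dist (xs j) y ≤ r / 3 then {h.choose} else ∅ with hg
    refine ⟨t.biUnion g, ?_, ?_⟩
    · calc (t.biUnion g).card ≤ ∑ y ∈ t, (g y).card := Finset.card_biUnion_le
        _ ≤ ∑ _y ∈ t, 1 := Finset.sum_le_sum (by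
              intro y _
              by_cases h : ∃ j, dist (xs j) y ≤ r / 3 <;> simp [hg, h])
        _ = t.card := by simp
        _ ≤ N := htc
    · intro j hj
      have hmem : xs j ∈ Metric.closedBall (xs i) (2 ^ 5 * (r / 3)) := by
        rw [Metric.mem_closedBall, dist_comm]
        nlinarith
      obtain ⟨y, hy, hjy⟩ := Set.mem_iUnion₂.mp (htcov hmem)
      rw [Metric.mem_closedBall] at hjy
      have hex : ∃ j', dist (xs j') y ≤ r / 3 := ⟨j, hjy⟩
      have hjj' : j = hex.choose := by
        by_contra hne
        have h1 := hsep j hex.choose hne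
        have h2 := hex.choose_spec
        have h3 : dist (xs j) (xs hex.choose) ≤ dist (xs j) y + dist (xs hex.choose) y :=
          dist_triangle_right _ _ _
        linarith
      refine Finset.mem_biUnion.mpr ⟨y, hy, ?_⟩
      rw [hg]
      simp only [dif_pos hex, Finset.mem_singleton]
      exact hjj'
  choose S hScard hSmem using hball
  have hself : ∀ i, i ∈ S i := fun i => hSmem i i (by rw [dist_self]; positivity)
  have hN : 0 < N :=
    lt_of_lt_of_le (Finset.card_pos.mpr ⟨_, hself (Classical.arbitrary J)⟩)
      (hScard (Classical.arbitrary J))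
  haveI : Nonempty (Fin N) := ⟨⟨0, hN⟩⟩
  obtain ⟨e, he⟩ := exists_injective_nat J
  -- greedy coloring: a fresh color always exists
  have fresh : ∀ (j : J) (f : J → Fin N), ∃ c : Fin N,
      ∀ j', j' ≠ j → e j' < e j → dist (xs j) (xs j') ≤ 10 * r → f j' ≠ c := by
    intro j f
    set T := (S j).filter (fun j' => j' ≠ j ∧ e j' < e j) with hT
    have hTcard : T.card < N := by
      have h1 : T ⊆ (S j).erase j := by
        intro a ha
        rw [hT, Finset.mem_filter] at ha
        exact Finset.mem_erase.mpr ⟨ha.2.1, ha.1⟩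
      calc T.card ≤ ((S j).erase j).card := Finset.card_le_card h1
        _ < (S j).card := Finset.card_erase_lt_of_mem (hself j)
        _ ≤ N := hScard j
    have himg : (T.image f).card < N := lt_of_le_of_lt Finset.card_image_le hTcard
    have hexc : ∃ c : Fin N, c ∉ T.image f := by
      by_contra hcon
      push_neg at hcon
      have hsub : (Finset.univ : Finset (Fin N)) ⊆ T.image f := fun c _ => hcon c
      have := Finset.card_le_card hsub
      rw [Finset.card_univ, Fintype.card_fin] at this
      omega
    obtain ⟨c, hc⟩ := hexc
    refine ⟨c, fun j' h1 h2 h3 hfc => hc ?_⟩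
    exact hfc ▸ Finset.mem_image_of_mem f (Finset.mem_filter.mpr ⟨hSmem j j' h3, h1, h2⟩)
  have hwf : WellFounded (fun a b : J => e a < e b) := InvImage.wf e Nat.lt_wfRel.wf
  set F : ∀ j : J, (∀ j', e j' < e j → Fin N) → Fin N := fun j rec =>
    (fresh j (fun j' => if h : e j' < e j then rec j' h else Classical.arbitrary _)).choose
    with hF
  set ξ : J → Fin N := hwf.fix F with hξdef
  have hξeq : ∀ j, ξ j =
      (fresh j (fun j' => if h : e j' < e j then ξ j' else Classical.arbitrary _)).choose := by
    intro j
    exact hwf.fix_eq F j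
  have hξ : ∀ j j', j' ≠ j → e j' < e j → dist (xs j) (xs j') ≤ 10 * r → ξ j' ≠ ξ j := by
    intro j j' h1 h2 h3
    have hspec := (fresh j
      (fun j'' => if h : e j'' < e j then ξ j'' else Classical.arbitrary _)).choose_spec
        j' h1 h2 h3
    rw [dif_pos h2] at hspec
    rw [hξeq j]
    exact hspec
  refine ⟨ξ, ?_⟩
  intro i j hij hcol
  by_contra hle
  push_neg at hle
  have hne : e i ≠ e j := fun hh => hij (he hh)
  rcases hne.lt_or_gt with hlt | hlt
  · exact absurd hcol (hξ j i hij hlt (by rwa [dist_comm]))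
  · exact absurd hcol.symm (hξ i j (Ne.symm hij) hlt hle)
end

section
/- Let (E, d) be a separable metric space, let x₀ ∈ E, let N ≥ 1 be an integer, let α ∈ (0, 1) and C > 0. Suppose that for each integer m ≥ 0 there is a map F_m : E → ℝ^N with F_m(x₀) = 0 such that C⁻¹ · d(x,y)^α ≤ ‖F_m(x) − F_m(y)‖ ≤ C · d(x,y)^α for all x, y ∈ B(x₀, 2^m). Then there exists a map F : E → ℝ^N such that C⁻¹ · d(x,y)^α ≤ ‖F(x) − F(y)‖ ≤ C · d(x,y)^α for all x, y ∈ E. -/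
/-- The limiting argument for unbounded spaces: if a separable metric space `E` admits,
for each `m ≥ 0`, an `α`-snowflake bilipschitz map `F_m : E → ℝ^N` (with uniform constant
`C` and `F_m x₀ = 0`) on the ball `B(x₀, 2^m)`, then `E` admits a global `α`-snowflake
bilipschitz map `F : E → ℝ^N` with the same constant. -/
theorem limit_of_snowflake_embeddings {E : Type*} [MetricSpace E]
    [TopologicalSpace.SeparableSpace E]
    (x₀ : E) (N : ℕ) (hN : 1 ≤ N) (α : ℝ) (hα₀ : 0 < α) (hα₁ : α < 1)
    (C : ℝ) (hC : 0 < C) (F : ℕ → E → EuclideanSpace ℝ (Fin N))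
    (hF₀ : ∀ m : ℕ, F m x₀ = 0)
    (hF : ∀ m : ℕ, ∀ x ∈ Metric.closedBall x₀ (2 ^ m), ∀ y ∈ Metric.closedBall x₀ (2 ^ m),
      C⁻¹ * dist x y ^ α ≤ ‖F m x - F m y‖ ∧ ‖F m x - F m y‖ ≤ C * dist x y ^ α) :
    ∃ G : E → EuclideanSpace ℝ (Fin N),
      ∀ x y : E,
        C⁻¹ * dist x y ^ α ≤ ‖G x - G y‖ ∧ ‖G x - G y‖ ≤ C * dist x y ^ α := by
  classical
  -- a nonprincipal ultrafilter on ℕ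
  set φ : Ultrafilter ℕ := Filter.hyperfilter ℕ with hφ
  -- every point is eventually in the ball B(x₀, 2^m)
  have hball : ∀ x : E, ∀ᶠ m in (φ : Filter ℕ), x ∈ Metric.closedBall x₀ (2 ^ m) := by
    intro x
    have h2 : Filter.Tendsto (fun m : ℕ => (2 : ℝ) ^ m) Filter.atTop Filter.atTop :=
      tendsto_pow_atTop_atTop_of_one_lt (by norm_num)
    have h3 : ∀ᶠ m in Filter.atTop, dist x x₀ ≤ (2 : ℝ) ^ m :=
      h2.eventually_ge_atTop (dist x x₀)
    have h4 : ∀ᶠ m in (Filter.cofinite : Filter ℕ), dist x x₀ ≤ (2 : ℝ) ^ m := by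
      rwa [Nat.cofinite_eq_atTop]
    have h5 : ∀ᶠ m in (φ : Filter ℕ), dist x x₀ ≤ (2 : ℝ) ^ m :=
      (Filter.hyperfilter_le_cofinite) h4
    filter_upwards [h5] with m hm
    exact Metric.mem_closedBall.2 hm
  have hx₀ : ∀ m : ℕ, x₀ ∈ Metric.closedBall x₀ ((2 : ℝ) ^ m) := by
    intro m
    exact Metric.mem_closedBall_self (by positivity)
  -- boundedness along the ultrafilter
  have hbdd : ∀ x : E, ∀ᶠ m in (φ : Filter ℕ),
      F m x ∈ Metric.closedBall (0 : EuclideanSpace ℝ (Fin N)) (C * dist x x₀ ^ α) := by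
    intro x
    filter_upwards [hball x] with m hm
    have := (hF m x hm x₀ (hx₀ m)).2
    rw [hF₀ m, sub_zero] at this
    simpa [Metric.mem_closedBall, dist_eq_norm] using this
  -- existence of the limit by compactness
  have hlim : ∀ x : E, ∃ z : EuclideanSpace ℝ (Fin N),
      Filter.Tendsto (fun m => F m x) (φ : Filter ℕ) (nhds z) := by
    intro x
    have hcpt : IsCompact (Metric.closedBall (0 : EuclideanSpace ℝ (Fin N))
        (C * dist x x₀ ^ α)) := isCompact_closedBall _ _
    have hle : (φ.map (fun m => F m x) : Filter (EuclideanSpace ℝ (Fin N))) ≤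
        Filter.principal (Metric.closedBall 0 (C * dist x x₀ ^ α)) := by
      rw [Filter.le_principal_iff]
      exact hbdd x
    obtain ⟨z, _, hz⟩ := hcpt.ultrafilter_le_nhds (φ.map (fun m => F m x)) hle
    exact ⟨z, hz⟩
  choose G hG using hlim
  refine ⟨G, fun x y => ?_⟩
  have hnorm : Filter.Tendsto (fun m => ‖F m x - F m y‖) (φ : Filter ℕ)
      (nhds ‖G x - G y‖) := ((hG x).sub (hG y)).norm
  have hev : ∀ᶠ m in (φ : Filter ℕ),
      C⁻¹ * dist x y ^ α ≤ ‖F m x - F m y‖ ∧ ‖F m x - F m y‖ ≤ C * dist x y ^ α := by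
    filter_upwards [hball x, hball y] with m hmx hmy
    exact hF m x hmx y hmy
  constructor
  · exact ge_of_tendsto hnorm (hev.mono fun m h => h.1)
  · exact le_of_tendsto hnorm (hev.mono fun m h => h.2)
end

section
/- Let (E, d) be a metric space, let k₀ ∈ ℤ, let α ∈ (1/2, 1), let τ > 0 be small enough (it suffices that τ ≤ min(1/2, 1 − α) and τ ln(1/τ) is below an absolute threshold), and set r_ℓ = τ^{2ℓ} for ℓ ∈ ℤ. Suppose (f_ℓ)_{ℓ ≥ k₀} are maps from E to ℝ^M, each Lipschitz with Lipschitz constant at most τ² r_ℓ^{-1}. Then for every k ≥ k₀ the partial sum F_k(x) = Σ_{k₀ ≤ ℓ ≤ k} r_ℓ^α f_ℓ(x) is Lipschitz from (E, d) to ℝ^M with Lipschitz constant at most r_k^{α−1}. -/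
private lemma geom_aux (q : ℝ) (hq0 : 0 ≤ q) (hq1 : q < 1) (n : ℕ) :
    ∑ i ∈ Finset.range n, q ^ i ≤ (1 - q)⁻¹ := by
  rw [geom_sum_eq hq1.ne, show (q ^ n - 1) / (q - 1) = (1 - q ^ n) / (1 - q) by
    rw [← neg_div_neg_eq]; ring_nf]
  rw [div_le_iff₀ (by linarith), inv_mul_cancel₀ (by linarith)]
  have : (0:ℝ) ≤ q ^ n := pow_nonneg hq0 n
  linarith

/-- (19)–(22): there is an absolute threshold `ε > 0` such that if `0 < τ ≤ min(1/2, 1-α)`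
and `τ ln(1/τ) ≤ ε`, and if each `f_ℓ` (for `ℓ ≥ k₀`) is Lipschitz with constant at most
`τ² r_ℓ⁻¹` (where `r_ℓ = τ^{2ℓ}`), then each partial sum
`F_k(x) = Σ_{k₀ ≤ ℓ ≤ k} r_ℓ^α f_ℓ(x)` is Lipschitz with constant at most `r_k^{α-1}`. -/
theorem partial_sums_lipschitz :
    ∃ ε : ℝ, 0 < ε ∧
      ∀ {E : Type} [MetricSpace E], ∀ (M : ℕ) (k₀ : ℤ) (α τ : ℝ),
        1 / 2 < α → α < 1 → 0 < τ → τ ≤ min (1 / 2) (1 - α) →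
        τ * Real.log (1 / τ) ≤ ε →
        ∀ f : ℤ → E → EuclideanSpace ℝ (Fin M),
          (∀ ℓ : ℤ, k₀ ≤ ℓ → ∀ x y : E,
            ‖f ℓ x - f ℓ y‖ ≤ τ ^ 2 * (τ ^ (2 * ℓ))⁻¹ * dist x y) →
          ∀ k : ℤ, k₀ ≤ k → ∀ x y : E,
            ‖(∑ ℓ ∈ Finset.Icc k₀ k, ((τ ^ (2 * ℓ)) ^ α) • f ℓ x) -
                ∑ ℓ ∈ Finset.Icc k₀ k, ((τ ^ (2 * ℓ)) ^ α) • f ℓ y‖ ≤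
              (τ ^ (2 * k)) ^ (α - 1) * dist x y := by
  refine ⟨1, one_pos, ?_⟩
  intro E _ M k₀ α τ hα hα1 hτ hτle _ f hf k hk x y
  have hτ2 : τ ≤ 1 / 2 := le_trans hτle (min_le_left _ _)
  have hτα : τ ≤ 1 - α := le_trans hτle (min_le_right _ _)
  have hτ1 : τ < 1 := by linarith
  -- positivity of powers
  have hzpow : ∀ ℓ : ℤ, (0:ℝ) < τ ^ (2 * ℓ) := fun ℓ => zpow_pos hτ _
  have hlogτ : Real.log 2 ≤ Real.log (1/τ) := by
    apply Real.log_le_log (by norm_num)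
    rw [le_div_iff₀ hτ]; linarith
  have hlog2 : (0.69 : ℝ) < Real.log 2 := by
    have := Real.log_two_gt_d9; linarith
  have hlogpos : (0:ℝ) < Real.log (1/τ) := by linarith
  set q : ℝ := τ ^ (2 * (1 - α)) with hq
  have hq0 : 0 < q := Real.rpow_pos_of_pos hτ _
  -- key: τ² ≤ 1 - q
  have hkey : τ ^ 2 ≤ 1 - q := by
    have hqe : q = Real.exp (-(2 * (1 - α) * Real.log (1/τ))) := by
      rw [hq, Real.rpow_def_of_pos hτ]
      congr 1
      rw [Real.log_div one_ne_zero hτ.ne', Real.log_one]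
      ring
    -- 1 - e^{-s} ≥ s e^{-s}
    have hs : 0 < 2 * (1 - α) * Real.log (1/τ) := by
      have : 0 < 1 - α := by linarith
      positivity
    set s := 2 * (1 - α) * Real.log (1/τ) with hsdef
    have h1 : s * Real.exp (-s) ≤ 1 - Real.exp (-s) := by
      have := Real.add_one_le_exp s
      have he : 0 < Real.exp (-s) := Real.exp_pos _
      have : (s + 1) * Real.exp (-s) ≤ Real.exp s * Real.exp (-s) := by
        apply mul_le_mul_of_nonneg_right this he.le
      rw [← Real.exp_add, add_neg_cancel, Real.exp_zero] at this
      nlinarith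
    -- s * exp(-s) = s * q ≥ 2τ log(1/τ) * q ≥ 2τ log(1/τ) * τ ≥ τ²·2·log2 ≥ τ²
    have hq1' : q ≤ 1 := by
      rw [hqe]; exact Real.exp_le_one_iff.mpr (by linarith)
    have hτq : τ ≤ q := by
      rw [hq]
      calc τ = τ ^ (1:ℝ) := (Real.rpow_one τ).symm
        _ ≤ τ ^ (2 * (1 - α)) := by
          apply Real.rpow_le_rpow_of_exponent_ge hτ hτ1.le
          linarith
    have hsge : 2 * τ * Real.log (1/τ) ≤ s := by
      rw [hsdef]
      have : 0 < Real.log (1/τ) := hlogpos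
      nlinarith
    have : τ ^ 2 ≤ s * q := by
      have h2 : 2 * τ * Real.log (1/τ) * τ ≤ s * q := by
        apply mul_le_mul hsge hτq hτ.le (by nlinarith)
      nlinarith
    rw [hqe] at this
    rw [hqe]
    linarith [h1, this]
  have hq1 : q < 1 := by nlinarith [sq_nonneg τ, hτ]
  -- rewrite each coefficient
  have hcoef : ∀ ℓ : ℤ, (τ ^ (2 * ℓ)) ^ α * (τ ^ (2 * ℓ))⁻¹ = τ ^ ((2 * (ℓ:ℝ)) * (α - 1)) := by
    intro ℓ
    rw [← Real.rpow_intCast τ (2 * ℓ), ← Real.rpow_mul hτ.le,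
      ← Real.rpow_neg hτ.le, ← Real.rpow_add hτ]
    push_cast
    ring_nf
  -- per-term geometric identity
  have hterm : ∀ ℓ ∈ Finset.Icc k₀ k,
      τ ^ ((2 * (ℓ:ℝ)) * (α - 1)) = τ ^ ((2 * (k:ℝ)) * (α - 1)) * q ^ ((k - ℓ).toNat) := by
    intro ℓ hℓ
    have hℓk : ℓ ≤ k := (Finset.mem_Icc.mp hℓ).2
    have h0 : (0:ℤ) ≤ k - ℓ := by omega
    have hnz : ((k - ℓ).toNat : ℤ) = k - ℓ := Int.toNat_of_nonneg h0
    have hn : (((k - ℓ).toNat : ℝ)) = (k:ℝ) - (ℓ:ℝ) := by exact_mod_cast hnz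
    rw [hq, ← Real.rpow_natCast (τ ^ (2 * (1 - α))) _, ← Real.rpow_mul hτ.le,
      ← Real.rpow_add hτ, hn]
    ring_nf
  -- sum of the geometric tail
  have hsum : ∑ ℓ ∈ Finset.Icc k₀ k, q ^ ((k - ℓ).toNat) ≤ (1 - q)⁻¹ := by
    have heq : ∑ ℓ ∈ Finset.Icc k₀ k, q ^ ((k - ℓ).toNat)
        = ∑ j ∈ Finset.range ((k - k₀).toNat + 1), q ^ j := by
      apply Finset.sum_nbij' (fun ℓ => (k - ℓ).toNat) (fun j => k - j)
      · intro a ha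
        simp only [Finset.mem_Icc] at ha
        simp only [Finset.mem_range]
        omega
      · intro a ha
        simp only [Finset.mem_range] at ha
        simp only [Finset.mem_Icc]
        omega
      · intro a ha
        simp only [Finset.mem_Icc] at ha
        omega
      · intro a ha
        simp only [Finset.mem_range] at ha
        omega
      · intro a _
        rfl
    rw [heq]
    exact geom_aux q hq0.le hq1 _
  -- assemble
  rw [← Finset.sum_sub_distrib]
  have hbound : ‖∑ ℓ ∈ Finset.Icc k₀ k, (((τ ^ (2 * ℓ)) ^ α) • f ℓ x - ((τ ^ (2 * ℓ)) ^ α) • f ℓ y)‖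
      ≤ ∑ ℓ ∈ Finset.Icc k₀ k, τ ^ 2 * τ ^ ((2 * (ℓ:ℝ)) * (α - 1)) * dist x y := by
    refine le_trans (norm_sum_le _ _) (Finset.sum_le_sum ?_)
    intro ℓ hℓ
    have hℓ0 : k₀ ≤ ℓ := (Finset.mem_Icc.mp hℓ).1
    rw [← smul_sub, norm_smul, Real.norm_eq_abs,
      abs_of_pos (Real.rpow_pos_of_pos (hzpow ℓ) α)]
    calc (τ ^ (2 * ℓ)) ^ α * ‖f ℓ x - f ℓ y‖
        ≤ (τ ^ (2 * ℓ)) ^ α * (τ ^ 2 * (τ ^ (2 * ℓ))⁻¹ * dist x y) := by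
          apply mul_le_mul_of_nonneg_left (hf ℓ hℓ0 x y)
            (Real.rpow_pos_of_pos (hzpow ℓ) α).le
      _ = τ ^ 2 * τ ^ ((2 * (ℓ:ℝ)) * (α - 1)) * dist x y := by
          rw [← hcoef ℓ]; ring
  refine le_trans hbound ?_
  have hrw : ∀ ℓ ∈ Finset.Icc k₀ k,
      τ ^ 2 * τ ^ ((2 * (ℓ:ℝ)) * (α - 1)) * dist x y
      = (τ ^ 2 * dist x y * τ ^ ((2 * (k:ℝ)) * (α - 1))) * q ^ ((k - ℓ).toNat) := by
    intro ℓ hℓ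
    rw [hterm ℓ hℓ]; ring
  rw [Finset.sum_congr rfl hrw, ← Finset.mul_sum]
  have hck : (τ ^ (2 * k)) ^ α * (τ ^ (2 * k))⁻¹ = τ ^ ((2 * (k:ℝ)) * (α - 1)) := hcoef k
  have hck' : (τ ^ (2 * k)) ^ (α - 1) = τ ^ ((2 * (k:ℝ)) * (α - 1)) := by
    rw [← Real.rpow_intCast τ (2 * k), ← Real.rpow_mul hτ.le]
    push_cast
    ring_nf
  rw [hck']
  have hτk : (0:ℝ) < τ ^ ((2 * (k:ℝ)) * (α - 1)) := Real.rpow_pos_of_pos hτ _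
  calc τ ^ 2 * dist x y * τ ^ ((2 * (k:ℝ)) * (α - 1)) * ∑ ℓ ∈ Finset.Icc k₀ k, q ^ ((k - ℓ).toNat)
      ≤ τ ^ 2 * dist x y * τ ^ ((2 * (k:ℝ)) * (α - 1)) * (1 - q)⁻¹ := by
        apply mul_le_mul_of_nonneg_left hsum
        positivity
    _ = (τ ^ 2 * (1 - q)⁻¹) * (τ ^ ((2 * (k:ℝ)) * (α - 1)) * dist x y) := by ring
    _ ≤ 1 * (τ ^ ((2 * (k:ℝ)) * (α - 1)) * dist x y) := by
        have h1q : 0 < 1 - q := by nlinarith [sq_nonneg τ]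
        have hmain : τ ^ 2 * (1 - q)⁻¹ ≤ 1 := by
          rw [inv_eq_one_div, mul_one_div, div_le_one h1q]
          simpa using hkey
        exact mul_le_mul_of_nonneg_right hmain (by positivity)
    _ = τ ^ ((2 * (k:ℝ)) * (α - 1)) * dist x y := one_mul _
end
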